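/- The function ψ : [0, T) → (0, 1] implicitly defined by t = (1/2)(1 − ψ²) + (1/2)·ln((1 + ψ²)/2) with ψ(0) = 1 satisfies the ODE ψ' = −ψ^{−1} − ψ^{−3}, and ψ(t) → 0 as t → (1/2)(1 − ln 2). -/

import Mathlib

private lemma gstrict {a b : ℝ} (ha : 0 ≤ a) (hab : a < b) :
    (1/2)*(1-b^2) + (1/2)*Real.log ((1+b^2)/2) <
      (1/2)*(1-a^2) + (1/2)*Real.log ((1+a^2)/2) := by
  have h1 : (0:ℝ) < 1 + a^2 := by positivity
  have h2 : (0:ℝ) < 1 + b^2 := by positivity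
  have hlt : a^2 < b^2 := by nlinarith
  have hx : (1:ℝ) < (1+b^2)/(1+a^2) := by rw [lt_div_iff₀ h1]; linarith
  have hlog : Real.log ((1+b^2)/(1+a^2)) < (1+b^2)/(1+a^2) - 1 :=
    Real.log_lt_sub_one_of_pos (by positivity) (by linarith)
  have e : Real.log ((1+b^2)/2) - Real.log ((1+a^2)/2) = Real.log ((1+b^2)/(1+a^2)) := by
    rw [Real.log_div h2.ne' two_ne_zero, Real.log_div h1.ne' two_ne_zero,
      Real.log_div h2.ne' h1.ne']
    ring
  have hb : (1+b^2)/(1+a^2) - 1 = (b^2-a^2)/(1+a^2) := by field_simp; ring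
  have hle : (b^2-a^2)/(1+a^2) ≤ b^2 - a^2 := by
    rw [div_le_iff₀ h1]; nlinarith
  rw [hb] at hlog
  linarith

/-- The self-similar shrinking profile ψ of the unit sphere under the flow with
speed Φ(z) = z + z³, implicitly defined by
t = (1/2)(1 − ψ²) + (1/2)ln((1+ψ²)/2), ψ(0) = 1, satisfies
ψ' = −ψ⁻¹ − ψ⁻³ and ψ(t) → 0 as t → T = (1/2)(1 − ln 2). -/
theorem stmt_4 (ψ : ℝ → ℝ) (T : ℝ) (hT : T = (1 / 2) * (1 - Real.log 2))
    (hpos : ∀ t ∈ Set.Ico (0 : ℝ) T, 0 < ψ t ∧ ψ t ≤ 1)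
    (hinit : ψ 0 = 1)
    (hdiff : ∀ t ∈ Set.Ico (0 : ℝ) T, DifferentiableAt ℝ ψ t)
    (himpl : ∀ t ∈ Set.Ico (0 : ℝ) T,
      t = (1 / 2) * (1 - (ψ t) ^ 2) + (1 / 2) * Real.log ((1 + (ψ t) ^ 2) / 2))
    (hmono : StrictAntiOn ψ (Set.Ico (0 : ℝ) T)) :
    (∀ t ∈ Set.Ico (0 : ℝ) T,
      HasDerivAt ψ (-(ψ t)⁻¹ - ((ψ t) ^ 3)⁻¹) t) ∧
    Filter.Tendsto ψ (nhdsWithin T (Set.Iio T)) (nhds 0) := by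
  have hTpos : 0 < T := by
    rw [hT]
    have := Real.log_two_lt_d9
    norm_num
    linarith
  constructor
  · intro t ht
    obtain ⟨hy0, hy1⟩ := hpos t ht
    set y := ψ t with hy
    have hden : (0:ℝ) < (1 + y^2)/2 := by positivity
    set d := deriv ψ t with hd
    have hψ : HasDerivAt ψ d t := (hdiff t ht).hasDerivAt
    have h1 : HasDerivAt (fun s => (ψ s)^2) (2 * y * d) t := by
      have := hψ.fun_pow 2
      simpa [hy] using this
    have h2 : HasDerivAt (fun s => (1 + (ψ s)^2)/2) ((2 * y * d)/2) t :=
      (h1.const_add 1).div_const 2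
    have h3 : HasDerivAt (fun s => Real.log ((1 + (ψ s)^2)/2))
        (((2 * y * d)/2) / ((1 + y^2)/2)) t := h2.log hden.ne'
    have h4 : HasDerivAt (fun s => (1/2) * (1 - (ψ s)^2))
        ((1/2) * (-(2 * y * d))) t := by
      have := ((h1.const_sub 1)).const_mul (1/2 : ℝ)
      simpa using this
    have hG : HasDerivAt (fun s => (1/2) * (1 - (ψ s)^2)
        + (1/2) * Real.log ((1 + (ψ s)^2)/2))
        ((1/2) * (-(2 * y * d)) + (1/2) * (((2 * y * d)/2) / ((1 + y^2)/2))) t :=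
      h4.add (h3.const_mul (1/2 : ℝ))
    have hGw := hG.hasDerivWithinAt (s := Set.Ico (0:ℝ) T)
    have hidw : HasDerivWithinAt (fun s => (1/2) * (1 - (ψ s)^2)
        + (1/2) * Real.log ((1 + (ψ s)^2)/2)) 1 (Set.Ico (0:ℝ) T) t := by
      refine (hasDerivWithinAt_id t (Set.Ico (0:ℝ) T)).congr ?_ ?_
      · intro x hx; exact (himpl x hx).symm
      · exact (himpl t ht).symm
    have hud : UniqueDiffWithinAt ℝ (Set.Ico (0:ℝ) T) t := uniqueDiffOn_Ico 0 T t ht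
    have heq : (1/2) * (-(2 * y * d)) + (1/2) * (((2 * y * d)/2) / ((1 + y^2)/2)) = 1 :=
      hud.eq_deriv _ hGw hidw
    have hdval : d = -y⁻¹ - (y^3)⁻¹ := by
      have hy3 : y^3 ≠ 0 := by positivity
      field_simp at heq ⊢
      nlinarith [heq, sq_nonneg y]
    rw [← hdval]
    exact hψ
  · rw [Metric.tendsto_nhdsWithin_nhds]
    intro ε hε
    set ε' := min ε 1 with hε'
    have hεε' : ε' ≤ ε := min_le_left _ _
    clear_value ε'
    have hε'0 : 0 < ε' := by rw [hε']; exact lt_min hε one_pos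
    have hε'1 : ε' ≤ 1 := by rw [hε']; exact min_le_right _ _
    set t₀ := (1/2) * (1 - ε'^2) + (1/2) * Real.log ((1 + ε'^2)/2) with ht₀
    clear_value t₀
    have hg1 : (1/2) * (1 - (1:ℝ)^2) + (1/2) * Real.log ((1 + (1:ℝ)^2)/2) = 0 := by
      norm_num
    have ht₀0 : 0 ≤ t₀ := by
      rcases lt_or_eq_of_le hε'1 with h | h
      · have := gstrict (le_of_lt hε'0) h
        rw [hg1] at this
        linarith
      · rw [ht₀, h, hg1]
    have ht₀T : t₀ < T := by
      have := gstrict (le_refl 0) hε'0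
      have h0 : (1/2) * (1 - (0:ℝ)^2) + (1/2) * Real.log ((1 + (0:ℝ)^2)/2) = T := by
        rw [hT]
        have : Real.log ((1 + (0:ℝ)^2)/2) = - Real.log 2 := by
          norm_num
          rw [show (1:ℝ)/2 = 2⁻¹ by norm_num, Real.log_inv]
        rw [this]
        ring
      rw [h0] at this
      rw [ht₀]
      exact this
    refine ⟨T - t₀, by linarith, ?_⟩
    intro x hx hdist
    have hxT : x < T := hx
    rw [Real.dist_eq, abs_of_nonpos (by linarith)] at hdist
    have hxt₀ : t₀ < x := by linarith
    have hx0 : 0 ≤ x := le_trans ht₀0 (le_of_lt hxt₀)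
    have hxmem : x ∈ Set.Ico (0:ℝ) T := ⟨hx0, hxT⟩
    obtain ⟨hpx, _⟩ := hpos x hxmem
    have hlt : ψ x < ε' := by
      by_contra h
      push_neg at h
      rcases lt_or_eq_of_le h with h' | h'
      · have := gstrict (le_of_lt hε'0) h'
        have himx := himpl x hxmem
        rw [← himx] at this
        linarith
      · have himx := himpl x hxmem
        rw [← h'] at himx
        rw [← ht₀] at himx
        linarith
    rw [Real.dist_eq, sub_zero, abs_of_pos hpx]
    exact lt_of_lt_of_le hlt hεε'
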